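/- Under the Hypothesis on the noise family g_{γ₁}, the reduced polynomial system F_k(γ₁, a₂, ã₃, ã₅, …, ã_N) = 0 (k = 2, 3, 5, …, N) obtained from the stationary Maxwellian Fourier system by writing a_p = a₁ã_p for odd p and eliminating even modes has, for γ₁ sufficiently near π/4, a unique differentiable solution branch through (π/4; 0, …, 0), and this branch satisfies a₂(γ₁) = (12/π)(γ₁ − π/4) + O((γ₁ − π/4)²), ã₃(γ₁) = (144 γ₃(π/4)/(4π γ₃(π/4) + 3π²))(γ₁ − π/4) + O((γ₁ − π/4)²), and ã_k(γ₁) = O((γ₁ − π/4)²) for odd k with 5 ≤ k ≤ N. -/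

import Mathlib

open Real

/-- Maxwellian kernel transform: `Γ(u) = sin(πu)/(πu)` for `u ≠ 0`, `Γ(0) = 1`. -/
noncomputable def Gam (u : ℝ) : ℝ :=
  if u = 0 then 1 else Real.sin (π * u) / (π * u)

/-- `m(q)`: the 2-adic valuation of `q`, so `q = ω(q)·2^{m(q)}` with `ω(q)` odd. -/
def mval (q : ℕ) : ℕ := padicValNat 2 q

/-- `ω(q)`: the odd part of `q`. -/
def om (q : ℕ) : ℕ := q / 2 ^ mval q

/-- `η(q) = 2^{m(q)-1}`, so that `q = 2ω(q)η(q)` for even `q`. -/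
def eta (q : ℕ) : ℕ := 2 ^ (mval q - 1)

/-- `γ̃_q = γ_q ∏_{j=1}^{m(q)-1} γ_{ω(q)2^{m(q)-j}}^{2^j}`, so that for even `q`
the even-mode relations give `a_q = γ̃_q a_{ω(q)}^{2η(q)}`. -/
noncomputable def tgam (γ : ℕ → ℝ → ℝ) (γ₁ : ℝ) (q : ℕ) : ℝ :=
  γ q γ₁ * ∏ j ∈ Finset.Ico 1 (mval q), (γ (om q * 2 ^ (mval q - j)) γ₁) ^ (2 ^ j)

/-- Extension of the reduced odd coordinates `ã` by the convention `ã₁ = 1`. -/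
def ext1 (ta : ℕ → ℝ) : ℕ → ℝ := fun p => if p = 1 then 1 else ta p

/-- The substituted product `a_q a_p / a₁ = γ̃_q (a₂/γ₂)^{η(q)} ã_{ω(q)}^{2η(q)} ã_p`
for `q` even and `p` odd. -/
noncomputable def Tsub (γ : ℕ → ℝ → ℝ) (γ₁ : ℝ) (a₂ : ℝ) (ta : ℕ → ℝ) (q p : ℕ) : ℝ :=
  tgam γ γ₁ q * (a₂ / γ 2 γ₁) ^ eta q * (ext1 ta (om q)) ^ (2 * eta q) * ext1 ta p

/-- For a pair `(n, m)` of indices of opposite parity, the substituted product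
`a_n a_m / a₁` written with the even index first. -/
noncomputable def PTsub (γ : ℕ → ℝ → ℝ) (γ₁ : ℝ) (a₂ : ℝ) (ta : ℕ → ℝ) (n m : ℕ) : ℝ :=
  if Even n then Tsub γ γ₁ a₂ ta n m else Tsub γ γ₁ a₂ ta m n

/-- The reduced polynomial system `F_k(γ₁, a₂, ã₃, ã₅, …, ã_N)`: `F₂` is the mode-1
stationary equation divided by `a₁`, and, for odd `k ≥ 3`, `F_k` is the mode-`k` stationary
equation divided by `a₁`, where `a_p = a₁ ã_p` for odd `p` and even modes are eliminated
through `a_q = γ̃_q a_{ω(q)}^{2η(q)}` and `a₁² = a₂/γ₂`. -/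
noncomputable def Fred (γ : ℕ → ℝ → ℝ) (N : ℕ) (γ₁ : ℝ) (a₂ : ℝ) (ta : ℕ → ℝ) (k : ℕ) : ℝ :=
  if k = 2 then
    (2 * γ 1 γ₁ * Gam (1 / 2) - 1)
      + 2 * γ 1 γ₁ * (∑ n ∈ Finset.Icc 2 N,
          Gam ((n : ℝ) - 1 / 2) * PTsub γ γ₁ a₂ ta n (n - 1))
  else
    (2 * γ k γ₁ * Gam ((k : ℝ) / 2) - 1) * ta k
      + γ k γ₁ * (∑ n ∈ Finset.Ico 1 k,
          Gam ((n : ℝ) - (k : ℝ) / 2) * PTsub γ γ₁ a₂ ta n (k - n))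
      + 2 * γ k γ₁ * (∑ n ∈ Finset.Icc (k + 1) N,
          Gam ((n : ℝ) - (k : ℝ) / 2) * PTsub γ γ₁ a₂ ta n (n - k))


namespace Stmt15

open Filter Topology

/-! ### Basic numeric facts -/

lemma pi4_pos : (0:ℝ) < π / 4 := by positivity

lemma pi4_lt_one : π / 4 < 1 := by nlinarith [Real.pi_lt_d2]

lemma pi4_mem_Icc : π / 4 ∈ Set.Icc (0:ℝ) 1 := ⟨le_of_lt pi4_pos, le_of_lt pi4_lt_one⟩

lemma Gam_half : Gam (1/2) = 2 / π := by
  rw [Gam, if_neg (by norm_num)]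
  rw [show π * (1/2) = π/2 by ring, Real.sin_pi_div_two]
  rw [eq_div_iff Real.pi_ne_zero]
  field_simp

lemma Gam_neg_half : Gam (-(1/2)) = 2 / π := by
  rw [Gam, if_neg (by norm_num)]
  rw [show π * (-(1/2)) = -(π/2) by ring, Real.sin_neg, Real.sin_pi_div_two]
  rw [eq_div_iff Real.pi_ne_zero]
  field_simp

lemma Gam_three_half : Gam (3/2) = -(2 / (3*π)) := by
  rw [Gam, if_neg (by norm_num)]
  have h : Real.sin (π * (3/2)) = -1 := by
    rw [show π * (3/2) = π/2 + π by ring, Real.sin_add_pi, Real.sin_pi_div_two]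
  rw [h]
  rw [div_eq_iff (by positivity : π * (3/2) ≠ 0)]
  field_simp

lemma abs_Gam_le {u : ℝ} (hu : 0 < u) : |Gam u| ≤ 1 / (π * u) := by
  rw [Gam, if_neg hu.ne', abs_div]
  have hpu : (0:ℝ) < π * u := by positivity
  rw [abs_of_pos hpu]
  have h1 : |Real.sin (π * u)| ≤ 1 := abs_le.mpr ⟨Real.neg_one_le_sin _, Real.sin_le_one _⟩
  gcongr



/-! ### Facts about `mval`, `om`, `eta` -/

lemma mval_eq_factorization {q : ℕ} : mval q = q.factorization 2 := by
  rw [mval, Nat.factorization_def _ Nat.prime_two]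

lemma mval_pos {q : ℕ} (hq : Even q) (h0 : q ≠ 0) : 1 ≤ mval q := by
  rw [mval_eq_factorization]
  exact (Nat.Prime.factorization_pos_of_dvd Nat.prime_two h0 hq.two_dvd)

lemma pow_mval_mul_om {q : ℕ} (h0 : q ≠ 0) : 2 ^ mval q * om q = q := by
  rw [om, mval_eq_factorization]
  exact Nat.ordProj_mul_ordCompl_eq_self q 2

lemma om_odd {q : ℕ} (h0 : q ≠ 0) : Odd (om q) := by
  rw [← Nat.not_even_iff_odd, even_iff_two_dvd]
  rw [om, mval_eq_factorization]
  exact Nat.not_dvd_ordCompl Nat.prime_two h0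

lemma om_le {q : ℕ} : om q ≤ q := Nat.div_le_self _ _

lemma om_pos {q : ℕ} (h0 : q ≠ 0) : 0 < om q := by
  rw [om, mval_eq_factorization]
  exact Nat.ordCompl_pos 2 h0

lemma eta_pos (q : ℕ) : 0 < eta q := Nat.pow_pos (by norm_num)

lemma mval_two : mval 2 = 1 := by
  rw [mval]; exact padicValNat.self (by norm_num)

lemma om_two : om 2 = 1 := by rw [om, mval_two]; norm_num

lemma eta_two : eta 2 = 1 := by rw [eta, mval_two]; norm_num

lemma q_eq_two {q : ℕ} (hq : Even q) (h2 : 2 ≤ q) (h1 : eta q = 1) (hom : om q = 1) :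
    q = 2 := by
  have hm1 : 1 ≤ mval q := mval_pos hq (by omega)
  have hme : mval q - 1 = 0 := by
    by_contra h
    have h2le : 2 ^ 1 ≤ 2 ^ (mval q - 1) := Nat.pow_le_pow_right (by norm_num) (by omega)
    rw [eta] at h1
    omega
  have hm : mval q = 1 := by omega
  have := pow_mval_mul_om (q := q) (by omega)
  rw [hm, hom] at this
  omega

lemma tgam_index_le {q j : ℕ} (h0 : q ≠ 0) (hj : 1 ≤ j) :
    om q * 2 ^ (mval q - j) ≤ q := by
  calc om q * 2 ^ (mval q - j) ≤ om q * 2 ^ mval q := by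
        apply Nat.mul_le_mul_left
        exact Nat.pow_le_pow_right (by norm_num) (Nat.sub_le _ _)
    _ = q := by rw [mul_comm]; exact pow_mval_mul_om h0


/-! ### The ambient space and coordinate maps -/

/-- Ambient space. -/
abbrev XX (N : ℕ) := ℝ × (Fin (N+1) → ℝ)

/-- Reading off a coordinate, with zero for out-of-range indices. -/
def taOf {N : ℕ} (v : Fin (N+1) → ℝ) (i : ℕ) : ℝ := if h : i < N+1 then v ⟨i, h⟩ else 0

lemma taOf_zero {N i : ℕ} : taOf (0 : Fin (N+1) → ℝ) i = 0 := by
  unfold taOf; split <;> simp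

lemma taOf_fin {N : ℕ} (v : Fin (N+1) → ℝ) (k : Fin (N+1)) : taOf v k.1 = v k := by
  unfold taOf; rw [dif_pos k.2]

/-- Coordinate reading as a continuous linear map. -/
noncomputable def coordL (N : ℕ) (i : ℕ) : XX N →L[ℝ] ℝ :=
  if h : i < N+1 then
    (ContinuousLinearMap.proj (⟨i, h⟩ : Fin (N+1))).comp
      (ContinuousLinearMap.snd ℝ ℝ (Fin (N+1) → ℝ))
  else 0

lemma coordL_apply {N : ℕ} (i : ℕ) (x : XX N) : coordL N i x = taOf x.2 i := by
  unfold coordL taOf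
  split <;> simp

lemma coordL_eq {N : ℕ} (i : ℕ) : ⇑(coordL N i) = fun x : XX N => taOf x.2 i :=
  funext (coordL_apply i)

/-- First (scalar) coordinate as a continuous linear map. -/
noncomputable def fstL (N : ℕ) : XX N →L[ℝ] ℝ := ContinuousLinearMap.fst ℝ ℝ _

/-- The base point `(π/4, 0)`. -/
noncomputable def basept (N : ℕ) : XX N := (π/4, 0)

section Smoothness

variable {N : ℕ} {γ : ℕ → ℝ → ℝ}

lemma contDiffAt_coord (i : ℕ) (z : XX N) :
    ContDiffAt ℝ 2 (fun x : XX N => taOf x.2 i) z := by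
  rw [← coordL_eq]
  exact (coordL N i).contDiff.contDiffAt

lemma contDiffAt_gamma (hγC2 : ∀ k, k ≤ N → ContDiffOn ℝ 2 (γ k) (Set.Icc 0 1))
    {k : ℕ} (hk : k ≤ N) :
    ContDiffAt ℝ 2 (fun x : XX N => γ k x.1) (basept N) := by
  have h : ContDiffAt ℝ 2 (γ k) (π/4) :=
    (hγC2 k hk).contDiffAt (Icc_mem_nhds pi4_pos pi4_lt_one)
  exact ContDiffAt.comp (basept N) h contDiffAt_fst

lemma contDiffAt_ext1 (m : ℕ) (z : XX N) :
    ContDiffAt ℝ 2 (fun x : XX N => ext1 (taOf x.2) m) z := by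
  by_cases h : m = 1
  · simp only [ext1, h, if_pos]
    exact contDiffAt_const
  · simp only [ext1, if_neg h]
    exact contDiffAt_coord m z

lemma contDiffAt_finprod {ι : Type*} [DecidableEq ι] (s : Finset ι) (f : ι → XX N → ℝ)
    (z : XX N) (h : ∀ j ∈ s, ContDiffAt ℝ 2 (f j) z) :
    ContDiffAt ℝ 2 (fun x => ∏ j ∈ s, f j x) z := by
  induction s using Finset.induction_on with
  | empty => simpa using contDiffAt_const
  | @insert a t hj ih =>
    simp only [Finset.prod_insert hj]
    exact (h a (Finset.mem_insert_self a t)).mul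
      (ih fun j hjt => h j (Finset.mem_insert_of_mem hjt))

lemma contDiffAt_tgam (hγC2 : ∀ k, k ≤ N → ContDiffOn ℝ 2 (γ k) (Set.Icc 0 1))
    {q : ℕ} (hq0 : q ≠ 0) (hqN : q ≤ N) :
    ContDiffAt ℝ 2 (fun x : XX N => tgam γ x.1 q) (basept N) := by
  unfold tgam
  apply ContDiffAt.mul (contDiffAt_gamma hγC2 hqN)
  apply contDiffAt_finprod
  intro j hj
  apply ContDiffAt.pow
  apply contDiffAt_gamma hγC2
  exact le_trans (tgam_index_le hq0 (Finset.mem_Ico.mp hj).1) hqN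

end Smoothness

section Tlemmas

variable {N : ℕ} {γ : ℕ → ℝ → ℝ}

/-- The substituted product as a function on the ambient space. -/
noncomputable def Tfun (γ : ℕ → ℝ → ℝ) (N : ℕ) (q p : ℕ) : XX N → ℝ :=
  fun x => Tsub γ x.1 (taOf x.2 2) (taOf x.2) q p

lemma Tfun_base (q p : ℕ) : Tfun γ N q p (basept N) = 0 := by
  unfold Tfun Tsub basept
  simp [taOf_zero, zero_pow (eta_pos q).ne']

lemma contDiffAt_Tfun (hγC2 : ∀ k, k ≤ N → ContDiffOn ℝ 2 (γ k) (Set.Icc 0 1))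
    (h2pos : 0 < γ 2 (π/4)) (hN : 2 ≤ N) {q p : ℕ} (hq0 : q ≠ 0) (hqN : q ≤ N) :
    ContDiffAt ℝ 2 (Tfun γ N q p) (basept N) := by
  unfold Tfun Tsub
  apply ContDiffAt.mul
  apply ContDiffAt.mul
  apply ContDiffAt.mul
  · exact contDiffAt_tgam hγC2 hq0 hqN
  · exact ((contDiffAt_coord 2 _).div (contDiffAt_gamma hγC2 (by omega))
      (ne_of_gt h2pos)).pow _
  · exact (contDiffAt_ext1 _ _).pow _
  · exact contDiffAt_ext1 _ _

lemma mul_zero_hasFDerivAt {f g : XX N → ℝ} {z : XX N}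
    (hf : DifferentiableAt ℝ f z) (hg : DifferentiableAt ℝ g z)
    (h0f : f z = 0) (h0g : g z = 0) :
    HasFDerivAt (fun x => f x * g x) (0 : XX N →L[ℝ] ℝ) z := by
  have h := hf.hasFDerivAt.mul hg.hasFDerivAt
  rw [h0f, h0g] at h
  simp only [zero_smul, add_zero] at h
  exact h

lemma Tfun_hasFDerivAt_zero (hγC2 : ∀ k, k ≤ N → ContDiffOn ℝ 2 (γ k) (Set.Icc 0 1))
    (h2pos : 0 < γ 2 (π/4)) (hN : 2 ≤ N)
    {q p : ℕ} (hq : Even q) (hq2 : 2 ≤ q) (hqN : q ≤ N) (hne : ¬(q = 2 ∧ p = 1)) :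
    HasFDerivAt (Tfun γ N q p) (0 : XX N →L[ℝ] ℝ) (basept N) := by
  have hdf1 : DifferentiableAt ℝ (fun x : XX N => taOf x.2 2 / γ 2 x.1) (basept N) := by
    exact ((contDiffAt_coord 2 (basept N)).div
      (contDiffAt_gamma hγC2 (show 2 ≤ N by omega))
      (ne_of_gt h2pos)).differentiableAt two_ne_zero
  have hdf2 : DifferentiableAt ℝ (fun x : XX N =>
      tgam γ x.1 q * (taOf x.2 2 / γ 2 x.1) ^ (eta q - 1)
        * ext1 (taOf x.2) (om q) ^ (2 * eta q) * ext1 (taOf x.2) p) (basept N) := by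
    apply DifferentiableAt.mul (𝕜 := ℝ)
    apply DifferentiableAt.mul (𝕜 := ℝ)
    apply DifferentiableAt.mul (𝕜 := ℝ)
    · exact (contDiffAt_tgam hγC2 (by omega) hqN).differentiableAt two_ne_zero
    · exact hdf1.pow _
    · exact ((contDiffAt_ext1 _ _).differentiableAt two_ne_zero).pow _
    · exact (contDiffAt_ext1 _ _).differentiableAt two_ne_zero
  have h0f : (fun x : XX N => taOf x.2 2 / γ 2 x.1) (basept N) = 0 := by
    show taOf (0 : Fin (N+1) → ℝ) 2 / _ = 0
    rw [taOf_zero, zero_div]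
  have h0g : (fun x : XX N =>
      tgam γ x.1 q * (taOf x.2 2 / γ 2 x.1) ^ (eta q - 1)
        * ext1 (taOf x.2) (om q) ^ (2 * eta q) * ext1 (taOf x.2) p) (basept N) = 0 := by
    show tgam γ (π/4) q * (taOf (0 : Fin (N+1) → ℝ) 2 / γ 2 (π/4)) ^ (eta q - 1)
        * ext1 (taOf (0 : Fin (N+1) → ℝ)) (om q) ^ (2 * eta q)
        * ext1 (taOf (0 : Fin (N+1) → ℝ)) p = 0
    by_cases he : eta q = 1
    · by_cases hq2' : q = 2
      · have hp1 : p ≠ 1 := fun h => hne ⟨hq2', h⟩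
        have hx : ext1 (taOf (0 : Fin (N+1) → ℝ)) p = 0 := by
          simp [ext1, hp1, taOf_zero]
        rw [hx, mul_zero]
      · have hom : om q ≠ 1 := fun h => hq2' (q_eq_two hq hq2 he h)
        have hx : ext1 (taOf (0 : Fin (N+1) → ℝ)) (om q) = 0 := by
          simp [ext1, hom, taOf_zero]
        rw [hx, zero_pow (by have := eta_pos q; omega : 2 * eta q ≠ 0)]
        ring
    · rw [taOf_zero, zero_div, zero_pow (by have := eta_pos q; omega : eta q - 1 ≠ 0)]
      ring
  have h := mul_zero_hasFDerivAt hdf1 hdf2 h0f h0g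
  have hfun : Tfun γ N q p = fun x : XX N =>
      (taOf x.2 2 / γ 2 x.1) *
      (tgam γ x.1 q * (taOf x.2 2 / γ 2 x.1) ^ (eta q - 1)
        * ext1 (taOf x.2) (om q) ^ (2 * eta q) * ext1 (taOf x.2) p) := by
    funext x
    show tgam γ x.1 q * (taOf x.2 2 / γ 2 x.1) ^ eta q
        * ext1 (taOf x.2) (om q) ^ (2 * eta q) * ext1 (taOf x.2) p = _
    obtain ⟨e, he⟩ : ∃ e, eta q = e + 1 := ⟨eta q - 1, by have := eta_pos q; omega⟩
    rw [he]
    simp only [Nat.add_sub_cancel]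
    rw [pow_succ]
    ring
  rw [hfun]
  exact h

lemma Tfun_two_one (hγC2 : ∀ k, k ≤ N → ContDiffOn ℝ 2 (γ k) (Set.Icc 0 1))
    (h2pos : 0 < γ 2 (π/4)) (hN : 2 ≤ N) :
    HasFDerivAt (Tfun γ N 2 1) (coordL N 2) (basept N) := by
  have hcont : ContinuousAt (fun x : XX N => γ 2 x.1) (basept N) :=
    (contDiffAt_gamma hγC2 (by omega)).continuousAt
  have hne : ∀ᶠ x : XX N in 𝓝 (basept N), γ 2 x.1 ≠ 0 :=
    hcont.eventually_ne (ne_of_gt h2pos)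
  have heq : (fun x : XX N => taOf x.2 2) =ᶠ[𝓝 (basept N)] Tfun γ N 2 1 := by
    filter_upwards [hne] with x hx
    unfold Tfun Tsub tgam
    rw [mval_two, om_two, eta_two]
    simp only [ext1, Finset.Ico_self, Finset.prod_empty, mul_one, pow_one, if_pos, one_pow]
    field_simp
  have hc : HasFDerivAt (fun x : XX N => taOf x.2 2) (coordL N 2) (basept N) := by
    rw [← coordL_eq]
    exact (coordL N 2).hasFDerivAt
  exact hc.congr_of_eventuallyEq heq.symm

end Tlemmas

section PTlemmas

variable {N : ℕ} {γ : ℕ → ℝ → ℝ}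

/-- The parity-sorted substituted product as a function on the ambient space. -/
noncomputable def PTfun (γ : ℕ → ℝ → ℝ) (N : ℕ) (n m : ℕ) : XX N → ℝ :=
  fun x => PTsub γ x.1 (taOf x.2 2) (taOf x.2) n m

lemma PTfun_even {n m : ℕ} (h : Even n) : PTfun γ N n m = Tfun γ N n m := by
  funext x; simp only [PTfun, PTsub, Tfun, if_pos h]

lemma PTfun_odd {n m : ℕ} (h : ¬ Even n) : PTfun γ N n m = Tfun γ N m n := by
  funext x; simp only [PTfun, PTsub, Tfun, if_neg h]

lemma PTfun_base (n m : ℕ) : PTfun γ N n m (basept N) = 0 := by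
  by_cases h : Even n
  · rw [PTfun_even h]; exact Tfun_base _ _
  · rw [PTfun_odd h]; exact Tfun_base _ _

lemma contDiffAt_PTfun (hγC2 : ∀ k, k ≤ N → ContDiffOn ℝ 2 (γ k) (Set.Icc 0 1))
    (h2pos : 0 < γ 2 (π/4)) (hN : 2 ≤ N) {n m : ℕ}
    (hn0 : n ≠ 0) (hm0 : m ≠ 0) (hnN : n ≤ N) (hmN : m ≤ N) :
    ContDiffAt ℝ 2 (PTfun γ N n m) (basept N) := by
  by_cases h : Even n
  · rw [PTfun_even h]; exact contDiffAt_Tfun hγC2 h2pos hN hn0 hnN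
  · rw [PTfun_odd h]; exact contDiffAt_Tfun hγC2 h2pos hN hm0 hmN

lemma PTfun_deriv_sum2 (hγC2 : ∀ k, k ≤ N → ContDiffOn ℝ 2 (γ k) (Set.Icc 0 1))
    (h2pos : 0 < γ 2 (π/4)) (hN : 2 ≤ N) {n : ℕ} (h2n : 2 ≤ n) (hnN : n ≤ N) :
    HasFDerivAt (PTfun γ N n (n-1))
      (if n = 2 then coordL N 2 else (0 : XX N →L[ℝ] ℝ)) (basept N) := by
  by_cases hn2 : n = 2
  · subst hn2; rw [if_pos rfl, PTfun_even (by decide)]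
    exact Tfun_two_one hγC2 h2pos hN
  · rw [if_neg hn2]
    rcases Nat.even_or_odd n with he | ho
    · rw [PTfun_even he]
      exact Tfun_hasFDerivAt_zero hγC2 h2pos hN he h2n hnN (fun h => hn2 h.1)
    · rw [PTfun_odd (by rwa [← Nat.not_even_iff_odd] at ho)]
      have ho' := Nat.odd_iff.mp ho
      apply Tfun_hasFDerivAt_zero hγC2 h2pos hN
      · rw [Nat.even_iff]; omega
      · omega
      · omega
      · rintro ⟨-, h1⟩; omega

lemma PTfun_deriv_sumlow (hγC2 : ∀ k, k ≤ N → ContDiffOn ℝ 2 (γ k) (Set.Icc 0 1))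
    (h2pos : 0 < γ 2 (π/4)) (hN : 2 ≤ N) {k n : ℕ} (hk : Odd k) (hk3 : 3 ≤ k)
    (hkN : k ≤ N) (hn1 : 1 ≤ n) (hnk : n < k) :
    HasFDerivAt (PTfun γ N n (k-n))
      (if k = 3 then coordL N 2 else (0 : XX N →L[ℝ] ℝ)) (basept N) := by
  have hko := Nat.odd_iff.mp hk
  by_cases hk3' : k = 3
  · subst hk3'; rw [if_pos rfl]
    have : n = 1 ∨ n = 2 := by omega
    rcases this with rfl | rfl
    · rw [PTfun_odd (by decide)]
      exact Tfun_two_one hγC2 h2pos hN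
    · rw [PTfun_even (by decide)]
      exact Tfun_two_one hγC2 h2pos hN
  · rw [if_neg hk3']
    rcases Nat.even_or_odd n with he | ho
    · have hen := Nat.even_iff.mp he
      rw [PTfun_even he]
      apply Tfun_hasFDerivAt_zero hγC2 h2pos hN he (by omega) (by omega)
      rintro ⟨rfl, h1⟩; omega
    · have hon := Nat.odd_iff.mp ho
      rw [PTfun_odd (by rwa [← Nat.not_even_iff_odd] at ho)]
      apply Tfun_hasFDerivAt_zero hγC2 h2pos hN (by rw [Nat.even_iff]; omega)
        (by omega) (by omega)
      rintro ⟨h2, h1⟩; omega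

lemma PTfun_deriv_sumhigh (hγC2 : ∀ k, k ≤ N → ContDiffOn ℝ 2 (γ k) (Set.Icc 0 1))
    (h2pos : 0 < γ 2 (π/4)) (hN : 2 ≤ N) {k n : ℕ} (hk : Odd k) (hk3 : 3 ≤ k)
    (hn : k + 1 ≤ n) (hnN : n ≤ N) :
    HasFDerivAt (PTfun γ N n (n-k)) (0 : XX N →L[ℝ] ℝ) (basept N) := by
  have hko := Nat.odd_iff.mp hk
  rcases Nat.even_or_odd n with he | ho
  · have hen := Nat.even_iff.mp he
    rw [PTfun_even he]
    apply Tfun_hasFDerivAt_zero hγC2 h2pos hN he (by omega) (by omega)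
    rintro ⟨rfl, h1⟩; omega
  · have hon := Nat.odd_iff.mp ho
    rw [PTfun_odd (by rwa [← Nat.not_even_iff_odd] at ho)]
    apply Tfun_hasFDerivAt_zero hγC2 h2pos hN (by rw [Nat.even_iff]; omega)
      (by omega) (by omega)
    rintro ⟨h2, h1⟩; omega

end PTlemmas

section Fcomp

variable {N : ℕ} {γ : ℕ → ℝ → ℝ}

/-- The reduced system as a map on the ambient space. -/
noncomputable def Fcomp (γ : ℕ → ℝ → ℝ) (N k : ℕ) : XX N → ℝ :=
  fun x => Fred γ N x.1 (taOf x.2 2) (taOf x.2) k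

lemma hasFDerivAt_coord (i : ℕ) (z : XX N) :
    HasFDerivAt (fun x : XX N => taOf x.2 i) (coordL N i) z := by
  rw [← coordL_eq]; exact (coordL N i).hasFDerivAt

lemma sum_PTfun_base {s : Finset ℕ} {c : ℕ → ℝ} {g : ℕ → ℕ} :
    ∑ n ∈ s, c n * PTfun γ N n (g n) (basept N) = 0 :=
  Finset.sum_eq_zero fun n _ => by rw [PTfun_base, mul_zero]

lemma Fcomp_two_eq (hγ1 : ∀ s, γ 1 s = s) : Fcomp γ N 2 = fun x : XX N =>
    (2 * x.1 * Gam (1/2) - 1)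
      + 2 * x.1 * ∑ n ∈ Finset.Icc 2 N, Gam ((n:ℝ) - 1/2) * PTfun γ N n (n-1) x := by
  funext x
  simp only [Fcomp, Fred, if_pos rfl, hγ1, Finset.mul_sum]
  rfl

lemma Fcomp_two_base (hγ1 : ∀ s, γ 1 s = s) : Fcomp γ N 2 (basept N) = 0 := by
  rw [Fcomp_two_eq hγ1]
  show (2 * (π/4) * Gam (1/2) - 1) + 2 * (π/4) *
    (∑ n ∈ Finset.Icc 2 N, Gam ((n:ℝ) - 1/2) * PTfun γ N n (n-1) (basept N)) = 0
  rw [sum_PTfun_base, Gam_half]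
  field_simp
  ring

lemma Fcomp_two_deriv (hγ1 : ∀ s, γ 1 s = s)
    (hγC2 : ∀ k, k ≤ N → ContDiffOn ℝ 2 (γ k) (Set.Icc 0 1))
    (h2pos : 0 < γ 2 (π/4)) (hN : 2 ≤ N) :
    HasFDerivAt (Fcomp γ N 2)
      ((4/π) • fstL N + (-(1:ℝ)/3) • coordL N 2) (basept N) := by
  rw [Fcomp_two_eq hγ1]
  have hS : HasFDerivAt
      (fun x : XX N => ∑ n ∈ Finset.Icc 2 N, Gam ((n:ℝ) - 1/2) * PTfun γ N n (n-1) x)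
      (Gam ((2:ℝ) - 1/2) • coordL N 2) (basept N) := by
    have h := HasFDerivAt.fun_sum (u := Finset.Icc 2 N)
      (A := fun n (x : XX N) => Gam ((n:ℝ) - 1/2) * PTfun γ N n (n-1) x)
      (A' := fun n => if n = 2 then Gam ((n:ℝ) - 1/2) • coordL N 2 else 0)
      (fun n hn => by
        have hmem := Finset.mem_Icc.mp hn
        have hd := (PTfun_deriv_sum2 hγC2 h2pos hN hmem.1 hmem.2).const_mul
          (Gam ((n:ℝ) - 1/2))
        by_cases h2 : n = 2
        · rw [if_pos h2]; rw [if_pos h2] at hd; exact hd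
        · rw [if_neg h2]; rw [if_neg h2] at hd; simpa using hd)
    rw [Finset.sum_ite_eq' (Finset.Icc 2 N) 2
      (fun n => Gam ((n:ℝ) - 1/2) • coordL N 2)] at h
    rw [if_pos (Finset.mem_Icc.mpr ⟨le_refl 2, hN⟩)] at h
    exact h
  have hfst : HasFDerivAt (fun x : XX N => 2 * x.1) ((2:ℝ) • fstL N) (basept N) := by
    have := (fstL N).hasFDerivAt (x := basept N)
    exact this.const_mul 2
  have hA : HasFDerivAt (fun x : XX N => 2 * x.1 * Gam (1/2) - 1)
      (Gam (1/2) • ((2:ℝ) • fstL N)) (basept N) := (hfst.mul_const _).sub_const 1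
  have hB := hfst.mul hS
  have hcomb := hA.add hB
  have hS0 : ∑ n ∈ Finset.Icc 2 N, Gam ((n:ℝ) - 1/2) * PTfun γ N n (n-1) (basept N) = 0 :=
    sum_PTfun_base
  rw [show (basept N : XX N).1 = π/4 from rfl] at hcomb
  rw [hS0] at hcomb
  refine hcomb.congr_fderiv ?_
  refine ContinuousLinearMap.ext fun x => ?_
  have h32 : ((2:ℝ) - 1/2) = 3/2 := by norm_num
  simp only [ContinuousLinearMap.add_apply, ContinuousLinearMap.smul_apply, smul_eq_mul,
    ContinuousLinearMap.zero_apply, h32, Gam_half, Gam_three_half]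
  have hπ : (π : ℝ) ≠ 0 := Real.pi_ne_zero
  field_simp
  ring

lemma Fcomp_odd_eq {k : ℕ} (hk2 : k ≠ 2) : Fcomp γ N k = fun x : XX N =>
    (2 * γ k x.1 * Gam ((k:ℝ)/2) - 1) * taOf x.2 k
      + γ k x.1 * ∑ n ∈ Finset.Ico 1 k, Gam ((n:ℝ) - (k:ℝ)/2) * PTfun γ N n (k-n) x
      + 2 * γ k x.1 * ∑ n ∈ Finset.Icc (k+1) N, Gam ((n:ℝ) - (k:ℝ)/2) * PTfun γ N n (n-k) x := by
  funext x
  simp only [Fcomp, Fred, if_neg hk2]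
  rfl

lemma Fcomp_odd_base {k : ℕ} (hk2 : k ≠ 2) : Fcomp γ N k (basept N) = 0 := by
  rw [Fcomp_odd_eq hk2]
  show (2 * γ k (π/4) * Gam ((k:ℝ)/2) - 1) * taOf (0 : Fin (N+1) → ℝ) k
      + γ k (π/4) * ∑ n ∈ Finset.Ico 1 k, Gam ((n:ℝ) - (k:ℝ)/2) * PTfun γ N n (k-n) (basept N)
      + 2 * γ k (π/4) * ∑ n ∈ Finset.Icc (k+1) N,
          Gam ((n:ℝ) - (k:ℝ)/2) * PTfun γ N n (n-k) (basept N) = 0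
  rw [sum_PTfun_base, sum_PTfun_base, taOf_zero]
  ring

lemma Fcomp_odd_deriv (hγC2 : ∀ k, k ≤ N → ContDiffOn ℝ 2 (γ k) (Set.Icc 0 1))
    (h2pos : 0 < γ 2 (π/4)) (hN : 2 ≤ N) {k : ℕ} (hk : Odd k) (hk3 : 3 ≤ k) (hkN : k ≤ N) :
    HasFDerivAt (Fcomp γ N k)
      ((2 * γ k (π/4) * Gam ((k:ℝ)/2) - 1) • coordL N k
        + (if k = 3 then (γ 3 (π/4) * (4/π)) • coordL N 2 else 0)) (basept N) := by
  have hk2 : k ≠ 2 := by omega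
  rw [Fcomp_odd_eq hk2]
  -- first term
  have hγkd : DifferentiableAt ℝ (fun x : XX N => 2 * γ k x.1 * Gam ((k:ℝ)/2) - 1)
      (basept N) :=
    ((((contDiffAt_gamma hγC2 hkN).differentiableAt two_ne_zero).const_mul 2).mul_const
      _).sub_const 1
  have h1 := hγkd.hasFDerivAt.mul (hasFDerivAt_coord k (basept N))
  rw [show taOf (basept N).2 k = 0 from taOf_zero] at h1
  rw [zero_smul, add_zero] at h1
  -- second term
  have hS1 : HasFDerivAt
      (fun x : XX N => ∑ n ∈ Finset.Ico 1 k, Gam ((n:ℝ) - (k:ℝ)/2) * PTfun γ N n (k-n) x)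
      (if k = 3 then (4/π) • coordL N 2 else 0) (basept N) := by
    have h := HasFDerivAt.fun_sum (u := Finset.Ico 1 k)
      (A := fun n (x : XX N) => Gam ((n:ℝ) - (k:ℝ)/2) * PTfun γ N n (k-n) x)
      (A' := fun n => Gam ((n:ℝ) - (k:ℝ)/2) • (if k = 3 then coordL N 2 else 0))
      (fun n hn => by
        have hmem := Finset.mem_Ico.mp hn
        exact (PTfun_deriv_sumlow hγC2 h2pos hN hk hk3 hkN hmem.1 hmem.2).const_mul _)
    by_cases hk3' : k = 3
    · subst hk3'
      rw [if_pos rfl] at h ⊢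
      rw [show Finset.Ico 1 3 = {1, 2} from rfl, Finset.sum_pair (by norm_num)] at h
      have e1 : ((1:ℕ):ℝ) - ((3:ℕ):ℝ)/2 = -(1/2) := by push_cast; norm_num
      have e2 : ((2:ℕ):ℝ) - ((3:ℕ):ℝ)/2 = 1/2 := by push_cast; norm_num
      rw [e1, e2, Gam_neg_half, Gam_half, ← add_smul] at h
      rw [show (2/π + 2/π : ℝ) = 4/π by ring] at h
      exact h
    · rw [if_neg hk3'] at h ⊢
      simpa using h
  have hγd : DifferentiableAt ℝ (fun x : XX N => γ k x.1) (basept N) :=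
    (contDiffAt_gamma hγC2 hkN).differentiableAt two_ne_zero
  have h2 := hγd.hasFDerivAt.mul hS1
  rw [show (∑ n ∈ Finset.Ico 1 k,
      Gam ((n:ℝ) - (k:ℝ)/2) * PTfun γ N n (k-n) (basept N)) = 0 from sum_PTfun_base] at h2
  rw [zero_smul, add_zero] at h2
  -- third term
  have hS2 : HasFDerivAt
      (fun x : XX N => ∑ n ∈ Finset.Icc (k+1) N, Gam ((n:ℝ) - (k:ℝ)/2) * PTfun γ N n (n-k) x)
      (0 : XX N →L[ℝ] ℝ) (basept N) := by
    have h := HasFDerivAt.fun_sum (u := Finset.Icc (k+1) N)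
      (A := fun n (x : XX N) => Gam ((n:ℝ) - (k:ℝ)/2) * PTfun γ N n (n-k) x)
      (A' := fun n => (0 : XX N →L[ℝ] ℝ))
      (fun n hn => by
        have hmem := Finset.mem_Icc.mp hn
        simpa using (PTfun_deriv_sumhigh hγC2 h2pos hN hk hk3 hmem.1 hmem.2).const_mul
          (Gam ((n:ℝ) - (k:ℝ)/2)))
    simpa using h
  have hγd2 : DifferentiableAt ℝ (fun x : XX N => 2 * γ k x.1) (basept N) :=
    hγd.const_mul 2
  have h3 := hγd2.hasFDerivAt.mul hS2
  rw [show (∑ n ∈ Finset.Icc (k+1) N,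
      Gam ((n:ℝ) - (k:ℝ)/2) * PTfun γ N n (n-k) (basept N)) = 0 from sum_PTfun_base] at h3
  rw [zero_smul, add_zero, smul_zero] at h3
  have hcomb := (h1.add h2).add h3
  rw [add_zero] at hcomb
  rw [show (basept N : XX N).1 = π/4 from rfl] at hcomb
  by_cases hk3' : k = 3
  · subst hk3'
    rw [if_pos rfl, smul_smul] at hcomb
    rw [if_pos rfl]
    exact hcomb
  · rw [if_neg hk3', smul_zero, add_zero] at hcomb
    rw [if_neg hk3', add_zero]
    exact hcomb

end Fcomp

section Assemble

variable {N : ℕ} {γ : ℕ → ℝ → ℝ}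

/-- The indices at which the reduced system has equations. -/
def Rel (k : ℕ) : Prop := k = 2 ∨ (Odd k ∧ 3 ≤ k)

instance : DecidablePred Rel := fun k => by unfold Rel; exact inferInstance

/-- The full map whose zero set is the reduced system (identity on irrelevant coordinates). -/
noncomputable def Gmap (γ : ℕ → ℝ → ℝ) (N : ℕ) (x : XX N) : Fin (N+1) → ℝ :=
  fun k => if Rel k.1 then Fcomp γ N k.1 x else x.2 k

/-- The graph map `(s, v) ↦ (s, G(s,v))`. -/
noncomputable def Hmap (γ : ℕ → ℝ → ℝ) (N : ℕ) (x : XX N) : XX N :=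
  (x.1, Gmap γ N x)

/-- The diagonal coefficients of the linearization. -/
noncomputable def dcoef (γ : ℕ → ℝ → ℝ) (k : ℕ) : ℝ := 2 * γ k (π/4) * Gam ((k:ℝ)/2) - 1

/-- Components of the linearization at the base point. -/
noncomputable def Lk (γ : ℕ → ℝ → ℝ) (N : ℕ) (k : ℕ) : XX N →L[ℝ] ℝ :=
  if k = 2 then (4/π) • fstL N + (-(1:ℝ)/3) • coordL N 2
  else if Rel k then dcoef γ k • coordL N k
    + (if k = 3 then (γ 3 (π/4) * (4/π)) • coordL N 2 else 0)
  else coordL N k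

/-- The linearization of `Hmap` at the base point. -/
noncomputable def Dclm (γ : ℕ → ℝ → ℝ) (N : ℕ) : XX N →L[ℝ] XX N :=
  (ContinuousLinearMap.fst ℝ ℝ _).prod
    (ContinuousLinearMap.pi (fun k : Fin (N+1) => Lk γ N k.1))

lemma Gmap_apply (x : XX N) (k : Fin (N+1)) :
    Gmap γ N x k = if Rel k.1 then Fcomp γ N k.1 x else x.2 k := rfl

lemma Gmap_base (hγ1 : ∀ s, γ 1 s = s) : Gmap γ N (basept N) = 0 := by
  funext k
  unfold Gmap
  split
  · rename_i h
    rcases h with h2 | ⟨hodd, h3⟩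
    · rw [h2, Fcomp_two_base hγ1]; rfl
    · rw [Fcomp_odd_base (by omega)]; rfl
  · rfl

lemma Hmap_base (hγ1 : ∀ s, γ 1 s = s) : Hmap γ N (basept N) = basept N := by
  unfold Hmap
  rw [Gmap_base hγ1]
  rfl

lemma contDiffAt_Fcomp_two (hγ1 : ∀ s, γ 1 s = s)
    (hγC2 : ∀ k, k ≤ N → ContDiffOn ℝ 2 (γ k) (Set.Icc 0 1))
    (h2pos : 0 < γ 2 (π/4)) (hN : 2 ≤ N) :
    ContDiffAt ℝ 2 (Fcomp γ N 2) (basept N) := by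
  rw [Fcomp_two_eq hγ1]
  apply ContDiffAt.add
  · exact ((contDiffAt_const.mul contDiffAt_fst).mul contDiffAt_const).sub contDiffAt_const
  · apply ContDiffAt.mul (contDiffAt_const.mul contDiffAt_fst)
    apply ContDiffAt.sum
    intro n hn
    have hmem := Finset.mem_Icc.mp hn
    exact contDiffAt_const.mul
      (contDiffAt_PTfun hγC2 h2pos hN (by omega) (by omega) hmem.2 (by omega))

lemma contDiffAt_Fcomp_odd (hγC2 : ∀ k, k ≤ N → ContDiffOn ℝ 2 (γ k) (Set.Icc 0 1))
    (h2pos : 0 < γ 2 (π/4)) (hN : 2 ≤ N) {k : ℕ} (hk3 : 3 ≤ k) (hkN : k ≤ N) :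
    ContDiffAt ℝ 2 (Fcomp γ N k) (basept N) := by
  rw [Fcomp_odd_eq (by omega : k ≠ 2)]
  have hγk : ContDiffAt ℝ 2 (fun x : XX N => γ k x.1) (basept N) :=
    contDiffAt_gamma hγC2 hkN
  apply ContDiffAt.add
  apply ContDiffAt.add
  · exact (((contDiffAt_const.mul hγk).mul contDiffAt_const).sub contDiffAt_const).mul
      (contDiffAt_coord k _)
  · apply hγk.mul
    apply ContDiffAt.sum
    intro n hn
    have hmem := Finset.mem_Ico.mp hn
    exact contDiffAt_const.mul
      (contDiffAt_PTfun hγC2 h2pos hN (by omega) (by omega) (by omega) (by omega))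
  · apply ContDiffAt.mul (contDiffAt_const.mul hγk)
    apply ContDiffAt.sum
    intro n hn
    have hmem := Finset.mem_Icc.mp hn
    exact contDiffAt_const.mul
      (contDiffAt_PTfun hγC2 h2pos hN (by omega) (by omega) (by omega) (by omega))

lemma contDiffAt_Hmap (hγ1 : ∀ s, γ 1 s = s)
    (hγC2 : ∀ k, k ≤ N → ContDiffOn ℝ 2 (γ k) (Set.Icc 0 1))
    (h2pos : 0 < γ 2 (π/4)) (hN : 2 ≤ N) :
    ContDiffAt ℝ 2 (Hmap γ N) (basept N) := by
  apply ContDiffAt.prodMk contDiffAt_fst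
  rw [show (Gmap γ N : XX N → Fin (N+1) → ℝ) = fun x k => Gmap γ N x k from rfl]
  apply contDiffAt_pi.mpr
  intro k
  show ContDiffAt ℝ 2 (fun x : XX N => if Rel k.1 then Fcomp γ N k.1 x else x.2 k) (basept N)
  by_cases h : Rel k.1
  · simp only [if_pos h]
    rcases h with h2 | ⟨hodd, h3⟩
    · rw [h2]; exact contDiffAt_Fcomp_two hγ1 hγC2 h2pos hN
    · exact contDiffAt_Fcomp_odd hγC2 h2pos hN h3 (by omega)
  · simp only [if_neg h]
    have : (fun x : XX N => x.2 k) = fun x : XX N => taOf x.2 k.1 := by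
      funext x; rw [taOf_fin]
    rw [this]
    exact contDiffAt_coord k.1 _

lemma hasFDerivAt_Hmap (hγ1 : ∀ s, γ 1 s = s)
    (hγC2 : ∀ k, k ≤ N → ContDiffOn ℝ 2 (γ k) (Set.Icc 0 1))
    (h2pos : 0 < γ 2 (π/4)) (hN : 2 ≤ N) :
    HasFDerivAt (Hmap γ N) (Dclm γ N) (basept N) := by
  have hG : HasFDerivAt (fun x : XX N => Gmap γ N x)
      (ContinuousLinearMap.pi fun k : Fin (N+1) => Lk γ N k.1) (basept N) := by
    apply hasFDerivAt_pi.mpr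
    intro k
    show HasFDerivAt (fun x : XX N => if Rel k.1 then Fcomp γ N k.1 x else x.2 k)
      (Lk γ N k.1) (basept N)
    by_cases h : Rel k.1
    · simp only [if_pos h]
      rcases h with h2 | ⟨hodd, h3⟩
      · rw [h2]
        rw [show Lk γ N 2 = (4/π) • fstL N + (-(1:ℝ)/3) • coordL N 2 from if_pos rfl]
        exact Fcomp_two_deriv hγ1 hγC2 h2pos hN
      · have hk2 : k.1 ≠ 2 := by omega
        rw [show Lk γ N k.1 = dcoef γ k.1 • coordL N k.1
            + (if k.1 = 3 then (γ 3 (π/4) * (4/π)) • coordL N 2 else 0) by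
          unfold Lk; rw [if_neg hk2, if_pos (show Rel k.1 from Or.inr ⟨hodd, h3⟩)]]
        exact Fcomp_odd_deriv hγC2 h2pos hN hodd h3 (by omega)
    · simp only [if_neg h]
      rw [show Lk γ N k.1 = coordL N k.1 by unfold Lk; rw [if_neg (fun h2 => h (Or.inl h2)), if_neg h]]
      have : (fun x : XX N => x.2 k) = fun x : XX N => taOf x.2 k.1 := by
        funext x; rw [taOf_fin]
      rw [this]
      exact hasFDerivAt_coord k.1 _
  exact ((ContinuousLinearMap.fst ℝ ℝ (Fin (N+1) → ℝ)).hasFDerivAt).prodMk hG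

end Assemble

section Invertible

variable {N : ℕ} {γ : ℕ → ℝ → ℝ}

lemma dcoef_neg (hγrange : ∀ k, 2 ≤ k → k ≤ N → ∀ s ∈ Set.Icc (0:ℝ) 1, γ k s ∈ Set.Icc (-1:ℝ) 1)
    {k : ℕ} (hk3 : 3 ≤ k) (hkN : k ≤ N) : dcoef γ k < 0 := by
  have hγ : |γ k (π/4)| ≤ 1 := by
    have := hγrange k (by omega) hkN _ pi4_mem_Icc
    exact abs_le.mpr this
  have hk1 : (3:ℝ) ≤ (k:ℝ) := by exact_mod_cast hk3
  have hku : (0:ℝ) < (k:ℝ)/2 := by linarith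
  have hGam : |Gam ((k:ℝ)/2)| ≤ 1/(π * ((k:ℝ)/2)) := abs_Gam_le hku
  have hπ : (3:ℝ) < π := Real.pi_gt_three
  have habs : |2 * γ k (π/4) * Gam ((k:ℝ)/2)| ≤ 2 * (1/(π * ((k:ℝ)/2))) := by
    rw [abs_mul, abs_mul, abs_two]
    calc 2 * |γ k (π/4)| * |Gam ((k:ℝ)/2)| ≤ 2 * 1 * (1/(π * ((k:ℝ)/2))) := by
          apply mul_le_mul (by nlinarith) hGam (abs_nonneg _) (by norm_num)
      _ = 2 * (1/(π * ((k:ℝ)/2))) := by ring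
  have hlt : 2 * (1/(π * ((k:ℝ)/2))) < 1 := by
    rw [mul_comm, div_mul_eq_mul_div, div_lt_one (by positivity)]
    nlinarith
  have := le_abs_self (2 * γ k (π/4) * Gam ((k:ℝ)/2))
  unfold dcoef
  linarith

lemma gamma3_den_pos
    (hγrange : ∀ k, 2 ≤ k → k ≤ N → ∀ s ∈ Set.Icc (0:ℝ) 1, γ k s ∈ Set.Icc (-1:ℝ) 1)
    (h3N : 3 ≤ N) : 0 < 4*π*γ 3 (π/4) + 3*π^2 := by
  have hγ := (hγrange 3 (by omega) h3N _ pi4_mem_Icc).1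
  have hπ : (3:ℝ) < π := Real.pi_gt_three
  nlinarith

lemma Lk_two_apply (x : XX N) :
    Lk γ N 2 x = (4/π) * x.1 + (-(1:ℝ)/3) * taOf x.2 2 := by
  unfold Lk
  rw [if_pos rfl]
  simp [fstL, coordL_apply]

lemma Lk_odd_apply {k : ℕ} (hk2 : k ≠ 2) (hrel : Rel k) (x : XX N) :
    Lk γ N k x = dcoef γ k * taOf x.2 k
      + (if k = 3 then (γ 3 (π/4) * (4/π)) * taOf x.2 2 else 0) := by
  unfold Lk
  rw [if_neg hk2, if_pos hrel]
  by_cases h3 : k = 3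
  · rw [if_pos h3, if_pos h3]
    simp [coordL_apply]
  · rw [if_neg h3, if_neg h3]
    simp [coordL_apply]

lemma Lk_irrel_apply {k : ℕ} (hrel : ¬ Rel k) (x : XX N) :
    Lk γ N k x = taOf x.2 k := by
  unfold Lk
  rw [if_neg (fun h => hrel (Or.inl h)), if_neg hrel]
  exact coordL_apply _ _

lemma Dclm_injective
    (hγrange : ∀ k, 2 ≤ k → k ≤ N → ∀ s ∈ Set.Icc (0:ℝ) 1, γ k s ∈ Set.Icc (-1:ℝ) 1)
    (hN : 2 ≤ N) : Function.Injective (Dclm γ N) := by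
  have key : ∀ z : XX N, Dclm γ N z = 0 → z = 0 := by
    intro z hz
    have h1 : z.1 = 0 := congrArg Prod.fst hz
    have h2 : ∀ k : Fin (N+1), Lk γ N k.1 z = 0 := by
      intro k
      exact congrFun (congrArg Prod.snd hz) k
    have hc2 : taOf z.2 2 = 0 := by
      have := h2 ⟨2, by omega⟩
      rw [Lk_two_apply, h1] at this
      have hπ := Real.pi_ne_zero
      field_simp at this
      rcases mul_eq_zero.mp (show π * taOf z.2 2 = 0 by linarith) with h | h
      · exact absurd h hπ
      · exact h
    have hall : ∀ k : Fin (N+1), z.2 k = 0 := by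
      intro k
      rw [← taOf_fin z.2 k]
      by_cases hrel : Rel k.1
      · rcases hrel with hh2 | ⟨hodd, h3⟩
        · rw [hh2]; exact hc2
        · have := h2 k
          rw [Lk_odd_apply (by omega) (Or.inr ⟨hodd, h3⟩)] at this
          have hd := dcoef_neg hγrange h3 (by omega : k.1 ≤ N)
          by_cases h3' : k.1 = 3
          · rw [if_pos h3', hc2, mul_zero, add_zero] at this
            rcases mul_eq_zero.mp this with h | h
            · exact absurd h (ne_of_lt hd)
            · exact h
          · rw [if_neg h3', add_zero] at this
            rcases mul_eq_zero.mp this with h | h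
            · exact absurd h (ne_of_lt hd)
            · exact h
      · have := h2 k
        rwa [Lk_irrel_apply hrel] at this
    exact Prod.ext h1 (funext hall)
  intro x y hxy
  have h0 : Dclm γ N (x - y) = 0 := by rw [map_sub, hxy, sub_self]
  have := key (x - y) h0
  exact sub_eq_zero.mp this

lemma Dclm_bijective
    (hγrange : ∀ k, 2 ≤ k → k ≤ N → ∀ s ∈ Set.Icc (0:ℝ) 1, γ k s ∈ Set.Icc (-1:ℝ) 1)
    (hN : 2 ≤ N) : Function.Bijective (Dclm γ N) := by
  have hinj := Dclm_injective hγrange hN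
  refine ⟨hinj, ?_⟩
  exact (LinearMap.injective_iff_surjective (f := (Dclm γ N).toLinearMap)).mp hinj

/-- The first-order coefficient vector of the solution branch. -/
noncomputable def cvec (γ : ℕ → ℝ → ℝ) (N : ℕ) : Fin (N+1) → ℝ :=
  fun k => if k.1 = 2 then 12/π
    else if k.1 = 3 then 144 * γ 3 (π/4) / (4*π*γ 3 (π/4) + 3*π^2) else 0

lemma taOf_cvec_two (hN : 2 ≤ N) : taOf (cvec γ N) 2 = 12/π := by
  rw [show (2:ℕ) = (⟨2, by omega⟩ : Fin (N+1)).1 from rfl, taOf_fin]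
  rfl

lemma Dclm_cvec
    (hγrange : ∀ k, 2 ≤ k → k ≤ N → ∀ s ∈ Set.Icc (0:ℝ) 1, γ k s ∈ Set.Icc (-1:ℝ) 1)
    (hN : 2 ≤ N) : Dclm γ N (1, cvec γ N) = (1, 0) := by
  have hπ := Real.pi_ne_zero
  refine Prod.ext rfl ?_
  show (fun k : Fin (N+1) => Lk γ N k.1 (1, cvec γ N)) = 0
  funext k
  show Lk γ N k.1 (1, cvec γ N) = 0
  by_cases h2 : k.1 = 2
  · rw [h2, Lk_two_apply]
    show (4/π) * 1 + (-(1:ℝ)/3) * taOf (cvec γ N) 2 = 0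
    rw [taOf_cvec_two hN]
    field_simp
    ring
  · by_cases hrel : Rel k.1
    · have hodd : Odd k.1 ∧ 3 ≤ k.1 := by
        rcases hrel with h | h
        · exact absurd h h2
        · exact h
      rw [Lk_odd_apply h2 hrel]
      by_cases h3 : k.1 = 3
      · rw [if_pos h3]
        have h3N : 3 ≤ N := by omega
        have hden := gamma3_den_pos hγrange h3N
        have htk : taOf (cvec γ N : Fin (N+1) → ℝ) k.1 =
            144 * γ 3 (π/4) / (4*π*γ 3 (π/4) + 3*π^2) := by
          rw [taOf_fin]
          show (if k.1 = 2 then _ else if k.1 = 3 then _ else _) = _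
          rw [if_neg h2, if_pos h3]
        show dcoef γ k.1 * taOf (cvec γ N) k.1
            + (γ 3 (π/4) * (4/π)) * taOf (cvec γ N) (2:ℕ) = 0
        rw [htk, taOf_cvec_two hN, h3]
        unfold dcoef
        rw [show ((3:ℕ):ℝ)/2 = 3/2 by norm_num, Gam_three_half]
        generalize γ 3 (π/4) = g at hden ⊢
        have hd : g * 4 + π * 3 ≠ 0 := by
          intro h; apply hden.ne'; linear_combination π * h
        field_simp
        linear_combination (-144*g) * mul_inv_cancel₀ hd
      · rw [if_neg h3, add_zero]
        have htk : taOf (cvec γ N : Fin (N+1) → ℝ) k.1 = 0 := by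
          rw [taOf_fin]
          show (if k.1 = 2 then _ else if k.1 = 3 then _ else _) = _
          rw [if_neg h2, if_neg h3]
        rw [htk, mul_zero]
    · rw [Lk_irrel_apply hrel]
      have h3 : k.1 ≠ 3 := fun h => hrel (Or.inr ⟨by rw [h]; decide, by omega⟩)
      rw [taOf_fin]
      show (if k.1 = 2 then _ else if k.1 = 3 then _ else _) = 0
      rw [if_neg h2, if_neg h3]

end Invertible

section Ext

variable {N : ℕ} {γ : ℕ → ℝ → ℝ} {s a₂ : ℝ} {ta ta' : ℕ → ℝ}

lemma par_ne {a b : ℕ} (h : a % 2 ≠ b % 2) : ¬(Even a ↔ Even b) := by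
  intro hiff
  rw [Nat.even_iff, Nat.even_iff] at hiff
  rcases Nat.mod_two_eq_zero_or_one a with ha | ha <;>
    rcases Nat.mod_two_eq_zero_or_one b with hb | hb <;> simp [ha, hb] at hiff ⊢ <;> omega

lemma ext1_congr (h : ∀ p, Odd p → p ≤ N → 3 ≤ p → ta p = ta' p)
    {x : ℕ} (hx : Odd x) (hxN : x ≤ N) : ext1 ta x = ext1 ta' x := by
  unfold ext1
  by_cases h1 : x = 1
  · rw [if_pos h1, if_pos h1]
  · rw [if_neg h1, if_neg h1]
    have hx3 : 3 ≤ x := by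
      rcases hx with ⟨m, hm⟩
      omega
    exact h x hx hxN hx3

lemma Tsub_congr (h : ∀ p, Odd p → p ≤ N → 3 ≤ p → ta p = ta' p)
    {q p : ℕ} (hq0 : q ≠ 0) (hqN : q ≤ N) (hp : Odd p) (hpN : p ≤ N) :
    Tsub γ s a₂ ta q p = Tsub γ s a₂ ta' q p := by
  unfold Tsub
  rw [ext1_congr h (om_odd hq0) (le_trans om_le hqN), ext1_congr h hp hpN]

lemma PTsub_congr (h : ∀ p, Odd p → p ≤ N → 3 ≤ p → ta p = ta' p)
    {n m : ℕ} (hn0 : n ≠ 0) (hm0 : m ≠ 0) (hnN : n ≤ N) (hmN : m ≤ N)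
    (hpar : n % 2 ≠ m % 2) :
    PTsub γ s a₂ ta n m = PTsub γ s a₂ ta' n m := by
  unfold PTsub
  by_cases he : Even n
  · rw [if_pos he, if_pos he]
    have hm : Odd m := by
      rw [Nat.odd_iff]
      have := Nat.even_iff.mp he
      omega
    exact Tsub_congr h hn0 hnN hm hmN
  · rw [if_neg he, if_neg he]
    have hn : Odd n := Nat.not_even_iff_odd.mp he
    exact Tsub_congr h hm0 hmN hn hnN

lemma Fred_congr (h : ∀ p, Odd p → p ≤ N → 3 ≤ p → ta p = ta' p)
    {k : ℕ} (hrel : Rel k) (hkN : k ≤ N) :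
    Fred γ N s a₂ ta k = Fred γ N s a₂ ta' k := by
  rcases hrel with h2 | ⟨hodd, h3⟩
  · subst h2
    unfold Fred
    rw [if_pos rfl, if_pos rfl]
    have hsum : ∑ n ∈ Finset.Icc 2 N, Gam ((n:ℝ) - 1/2) * PTsub γ s a₂ ta n (n-1)
        = ∑ n ∈ Finset.Icc 2 N, Gam ((n:ℝ) - 1/2) * PTsub γ s a₂ ta' n (n-1) := by
      apply Finset.sum_congr rfl
      intro n hn
      have hmem := Finset.mem_Icc.mp hn
      rw [PTsub_congr h (by omega) (by omega) (by omega) (by omega) (by omega)]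
    rw [hsum]
  · have hk2 : k ≠ 2 := by omega
    have hko := Nat.odd_iff.mp hodd
    unfold Fred
    rw [if_neg hk2, if_neg hk2]
    have hsum1 : ∑ n ∈ Finset.Ico 1 k, Gam ((n:ℝ) - (k:ℝ)/2) * PTsub γ s a₂ ta n (k-n)
        = ∑ n ∈ Finset.Ico 1 k, Gam ((n:ℝ) - (k:ℝ)/2) * PTsub γ s a₂ ta' n (k-n) := by
      apply Finset.sum_congr rfl
      intro n hn
      have hmem := Finset.mem_Ico.mp hn
      rw [PTsub_congr h (by omega) (by omega) (by omega) (by omega) (by omega)]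
    have hsum2 : ∑ n ∈ Finset.Icc (k+1) N, Gam ((n:ℝ) - (k:ℝ)/2) * PTsub γ s a₂ ta n (n-k)
        = ∑ n ∈ Finset.Icc (k+1) N, Gam ((n:ℝ) - (k:ℝ)/2) * PTsub γ s a₂ ta' n (n-k) := by
      apply Finset.sum_congr rfl
      intro n hn
      have hmem := Finset.mem_Icc.mp hn
      rw [PTsub_congr h (by omega) (by omega) (by omega) (by omega) (by omega)]
    rw [hsum1, hsum2, h k hodd hkN h3]

end Ext

section Taylor

variable {F : Type*} [NormedAddCommGroup F] [NormedSpace ℝ F]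

lemma taylor_bound {g : ℝ → F} {a : ℝ} {w : F}
    (hg : ContDiffAt ℝ 2 g a) (hw : HasDerivAt g w a) :
    ∃ r > (0:ℝ), ∃ C > (0:ℝ), ∀ s ∈ Set.Icc a (a + r),
      ‖g s - g a - (s - a) • w‖ ≤ C * (s - a)^2 := by
  obtain ⟨u, hu_nhds, hu⟩ := hg.contDiffOn le_rfl (by simp)
  obtain ⟨U, hUu, hUopen, haU⟩ := mem_nhds_iff.mp hu_nhds
  have hgU : ContDiffOn ℝ 2 g U := hu.mono hUu
  have hgdiff : DifferentiableOn ℝ g U := hgU.differentiableOn (by norm_num)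
  have hderiv_cd : ContDiffOn ℝ 1 (deriv g) U := hgU.deriv_of_isOpen hUopen (by norm_num)
  have hderiv_diff : DifferentiableOn ℝ (deriv g) U := hderiv_cd.differentiableOn one_ne_zero
  have hdd_cont : ContinuousOn (deriv (deriv g)) U :=
    hderiv_cd.continuousOn_deriv_of_isOpen hUopen le_rfl
  obtain ⟨ρ, hρ, hball⟩ := Metric.isOpen_iff.mp hUopen a haU
  set r : ℝ := ρ/2 with hrdef
  have hr : 0 < r := by positivity
  have hIccU : Set.Icc (a - r) (a + r) ⊆ U := by
    intro x hx
    apply hball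
    rw [Metric.mem_ball, Real.dist_eq, abs_sub_lt_iff]
    rcases hx with ⟨hx1, hx2⟩
    constructor <;> [skip; skip] <;> linarith
  obtain ⟨M, hM⟩ := (isCompact_Icc (a := a - r) (b := a + r)).exists_bound_of_continuousOn
    (hdd_cont.mono hIccU)
  have hM0 : 0 ≤ M := le_trans (norm_nonneg _) (hM a (by constructor <;> linarith))
  refine ⟨r, hr, M + 1, by positivity, ?_⟩
  intro s hs
  rcases hs with ⟨hs1, hs2⟩
  have hsubIcc : Set.Icc a s ⊆ Set.Icc (a - r) (a + r) := by
    intro x hx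
    rcases hx with ⟨h1, h2⟩
    constructor <;> linarith
  -- step 1 : bound the variation of deriv g
  have hstep1 : ∀ t ∈ Set.Icc a (a + r), ‖deriv g t - deriv g a‖ ≤ M * (t - a) := by
    intro t ht
    have hsub : Set.Icc a (a + r) ⊆ Set.Icc (a - r) (a + r) := by
      intro x hx
      rcases hx with ⟨h1, h2⟩
      constructor <;> linarith
    have := (convex_Icc a (a + r)).norm_image_sub_le_of_norm_hasDerivWithin_le
      (f := deriv g) (f' := deriv (deriv g)) (C := M) (x := a) (y := t)
      (fun x hx => ((hderiv_diff.differentiableAt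
        (hUopen.mem_nhds (hIccU (hsub hx)))).hasDerivAt).hasDerivWithinAt)
      (fun x hx => hM x (hsub hx)) (by constructor <;> linarith) ht
    calc ‖deriv g t - deriv g a‖ ≤ M * ‖t - a‖ := this
      _ = M * (t - a) := by rw [Real.norm_eq_abs, abs_of_nonneg (by linarith [ht.1])]
  have hderiva : deriv g a = w := hw.deriv
  -- step 2 : integrate once more
  have hstep2 := (convex_Icc a s).norm_image_sub_le_of_norm_hasDerivWithin_le
    (f := fun t => g t - t • w) (f' := fun t => deriv g t - w) (C := M * (s - a))
    (fun x hx => by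
      have hgd : HasDerivAt g (deriv g x) x :=
        (hgdiff.differentiableAt (hUopen.mem_nhds (hIccU (hsubIcc hx)))).hasDerivAt
      have hsw : HasDerivAt (fun t : ℝ => t • w) w x := by
        have := (hasDerivAt_id x).smul_const w
        simpa using this
      exact (hgd.sub hsw).hasDerivWithinAt)
    (fun x hx => by
      have hx' : x ∈ Set.Icc a (a + r) := ⟨hx.1, by linarith [hx.2]⟩
      calc ‖deriv g x - w‖ = ‖deriv g x - deriv g a‖ := by rw [hderiva]
        _ ≤ M * (x - a) := hstep1 x hx'
        _ ≤ M * (s - a) := by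
            apply mul_le_mul_of_nonneg_left _ hM0
            linarith [hx.2])
    (Set.left_mem_Icc.mpr hs1) (Set.right_mem_Icc.mpr hs1)
  have hfin : g s - g a - (s - a) • w = (g s - s • w) - (g a - a • w) := by
    rw [sub_smul]
    abel
  rw [hfin]
  calc ‖(g s - s • w) - (g a - a • w)‖ ≤ M * (s - a) * ‖s - a‖ := hstep2
    _ = M * (s - a)^2 := by
        rw [Real.norm_eq_abs, abs_of_nonneg (by linarith)]
        ring
    _ ≤ (M + 1) * (s - a)^2 := by nlinarith [sq_nonneg (s - a)]

end Taylor

end Stmt15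

open Stmt15 Filter Topology in

/-- Under the Hypothesis, the reduced polynomial system
`F_k(γ₁, a₂, ã₃, ã₅, …, ã_N) = 0` (`k = 2, 3, 5, …, N`) has, near `γ₁ = π/4`, a unique
differentiable solution branch through `(π/4; 0, …, 0)`, and this branch satisfies
`a₂(γ₁) = (12/π)(γ₁ - π/4) + O((γ₁-π/4)²)`,
`ã₃(γ₁) = (144γ₃(π/4)/(4πγ₃(π/4)+3π²))(γ₁ - π/4) + O((γ₁-π/4)²)`, and
`ã_k(γ₁) = O((γ₁-π/4)²)` for odd `5 ≤ k ≤ N`. -/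
theorem stmt_15
    (N : ℕ) (hN : 2 ≤ N)
    (γ : ℕ → ℝ → ℝ)
    (hγ0 : ∀ s, γ 0 s = 1)
    (hγ1 : ∀ s, γ 1 s = s)
    (hγhigh : ∀ k, N < k → ∀ s, γ k s = 0)
    (hγC2 : ∀ k, k ≤ N → ContDiffOn ℝ 2 (γ k) (Set.Icc 0 1))
    (hγrange : ∀ k, 2 ≤ k → k ≤ N → ∀ s ∈ Set.Icc (0 : ℝ) 1, γ k s ∈ Set.Icc (-1 : ℝ) 1)
    (hγ2pos : ∀ s ∈ Set.Icc (0 : ℝ) 1, 0 < γ 2 s) :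
    ∃ ε : ℝ, 0 < ε ∧ ∃ φ : ℝ → ℕ → ℝ,
      (∀ k, φ (π / 4) k = 0) ∧
      (∀ k, DifferentiableOn ℝ (fun s => φ s k) (Set.Ioo (π / 4 - ε) (π / 4 + ε))) ∧
      (∀ γ₁ ∈ Set.Ioo (π / 4 - ε) (π / 4 + ε),
        Fred γ N γ₁ (φ γ₁ 2) (φ γ₁) 2 = 0 ∧
        ∀ k, Odd k → 3 ≤ k → k ≤ N → Fred γ N γ₁ (φ γ₁ 2) (φ γ₁) k = 0) ∧
      (∀ ψ : ℝ → ℕ → ℝ,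
        (∀ k, ContinuousOn (fun s => ψ s k) (Set.Ioo (π / 4 - ε) (π / 4 + ε))) →
        (∀ k, ψ (π / 4) k = 0) →
        (∀ γ₁ ∈ Set.Ioo (π / 4 - ε) (π / 4 + ε),
          Fred γ N γ₁ (ψ γ₁ 2) (ψ γ₁) 2 = 0 ∧
          ∀ k, Odd k → 3 ≤ k → k ≤ N → Fred γ N γ₁ (ψ γ₁ 2) (ψ γ₁) k = 0) →
        ∃ δ : ℝ, 0 < δ ∧ ∀ γ₁ ∈ Set.Ioo (π / 4 - δ) (π / 4 + δ),
          ψ γ₁ 2 = φ γ₁ 2 ∧ ∀ k, Odd k → 3 ≤ k → k ≤ N → ψ γ₁ k = φ γ₁ k) ∧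
      (∃ C : ℝ, 0 < C ∧ ∀ γ₁ ∈ Set.Ioo (π / 4) (π / 4 + ε),
        |φ γ₁ 2 - (12 / π) * (γ₁ - π / 4)| ≤ C * (γ₁ - π / 4) ^ 2 ∧
        |φ γ₁ 3 - (144 * γ 3 (π / 4) / (4 * π * γ 3 (π / 4) + 3 * π ^ 2)) * (γ₁ - π / 4)| ≤
          C * (γ₁ - π / 4) ^ 2 ∧
        ∀ k, Odd k → 5 ≤ k → k ≤ N → |φ γ₁ k| ≤ C * (γ₁ - π / 4) ^ 2) := by
  classical
  have h2pos : 0 < γ 2 (π/4) := hγ2pos _ pi4_mem_Icc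
  have hA : ContDiffAt ℝ 2 (Hmap γ N) (basept N) := contDiffAt_Hmap hγ1 hγC2 h2pos hN
  have hbij : Function.Bijective (Dclm γ N) := Dclm_bijective hγrange hN
  set De : XX N ≃L[ℝ] XX N :=
    (LinearEquiv.ofBijective (Dclm γ N).toLinearMap hbij).toContinuousLinearEquiv with hDedef
  have hDe : (De : XX N →L[ℝ] XX N) = Dclm γ N := by
    apply ContinuousLinearMap.ext
    intro x
    rfl
  have hDefun : ∀ x : XX N, De x = Dclm γ N x := fun x => by rw [← hDe]; rfl
  have hB : HasFDerivAt (Hmap γ N) (De : XX N →L[ℝ] XX N) (basept N) := by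
    rw [hDe]
    exact hasFDerivAt_Hmap hγ1 hγC2 h2pos hN
  have hone : (2 : WithTop ℕ∞) ≠ 0 := two_ne_zero
  have hstrict : HasStrictFDerivAt (Hmap γ N) (De : XX N →L[ℝ] XX N) (basept N) :=
    hA.hasStrictFDerivAt' hB hone
  set Φ : XX N → XX N := hstrict.localInverse (Hmap γ N) De (basept N) with hΦdef
  have hHbase : Hmap γ N (basept N) = basept N := Hmap_base hγ1
  have hΦbase : Φ (basept N) = basept N := by
    have h := hstrict.localInverse_apply_image
    rwa [hHbase] at h
  have hΦcd : ContDiffAt ℝ 2 Φ (basept N) := by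
    have h : ContDiffAt ℝ 2 Φ (Hmap γ N (basept N)) := hA.to_localInverse hB hone
    rwa [hHbase] at h
  have hΦstrict : HasStrictFDerivAt Φ (De.symm : XX N →L[ℝ] XX N) (basept N) := by
    have h := hstrict.to_localInverse
    rwa [hHbase] at h
  have hrightinv : ∀ᶠ y in 𝓝 (basept N), Hmap γ N (Φ y) = y := by
    have h := hstrict.eventually_right_inverse
    rwa [hHbase] at h
  have hleftinv : ∀ᶠ x in 𝓝 (basept N), Φ (Hmap γ N x) = x :=
    hstrict.eventually_left_inverse
  -- differentiability neighborhood for Φ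
  obtain ⟨u, hu_nhds, hu⟩ := hΦcd.contDiffOn le_rfl (by simp)
  obtain ⟨U, hUu, hUopen, hbU⟩ := mem_nhds_iff.mp hu_nhds
  have hΦdiffU : DifferentiableOn ℝ Φ U := (hu.mono hUu).differentiableOn (by norm_num)
  have hι_cont : Continuous (fun s : ℝ => ((s, 0) : XX N)) :=
    continuous_id.prodMk continuous_const
  -- Taylor data
  have hgcd : ContDiffAt ℝ 2 (fun s : ℝ => (Φ (s, 0)).2) (π/4) := by
    have h1 : ContDiffAt ℝ 2 (fun s : ℝ => Φ (s, 0)) (π/4) :=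
      hΦcd.comp (π/4) (contDiffAt_id.prodMk contDiffAt_const)
    exact contDiffAt_snd.comp (π/4) h1
  have hDesymm : De.symm ((1:ℝ), (0 : Fin (N+1) → ℝ)) = (1, cvec γ N) := by
    rw [ContinuousLinearEquiv.symm_apply_eq, hDefun]
    exact (Dclm_cvec hγrange hN).symm
  have hΦder : HasDerivAt (fun s : ℝ => Φ (s, 0)) ((1:ℝ), cvec γ N) (π/4) := by
    have hι : HasDerivAt (fun s : ℝ => ((s, 0) : XX N)) ((1:ℝ), (0 : Fin (N+1) → ℝ)) (π/4) :=
      (hasDerivAt_id _).prodMk (hasDerivAt_const _ _)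
    have h := (hΦstrict.hasFDerivAt).comp_hasDerivAt (π/4) hι
    rwa [show ((De.symm : XX N →L[ℝ] XX N) ((1:ℝ), (0 : Fin (N+1) → ℝ)))
      = ((1:ℝ), cvec γ N) from hDesymm] at h
  have hgder : HasDerivAt (fun s : ℝ => (Φ (s, 0)).2) (cvec γ N) (π/4) := by
    have h := (ContinuousLinearMap.snd ℝ ℝ (Fin (N+1) → ℝ)).hasFDerivAt.comp_hasDerivAt
      (π/4) hΦder
    exact h
  obtain ⟨r, hrpos, C, hCpos, hTay⟩ := taylor_bound hgcd hgder
  -- choose ε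
  have hpre : {s : ℝ | Hmap γ N (Φ (s, 0)) = (s, 0) ∧ ((s, 0) : XX N) ∈ U} ∈ 𝓝 (π/4 : ℝ) := by
    have h3 : {y : XX N | Hmap γ N (Φ y) = y} ∩ U ∈ 𝓝 (basept N) :=
      Filter.inter_mem hrightinv (hUopen.mem_nhds hbU)
    have h4 := (hι_cont.continuousAt (x := (π/4 : ℝ))).preimage_mem_nhds
      (by exact h3)
    exact h4
  obtain ⟨ε₀, hε₀pos, hball₀⟩ := Metric.mem_nhds_iff.mp hpre
  set ε : ℝ := min (ε₀/2) r with hεdef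
  have hεpos : 0 < ε := lt_min (by positivity) hrpos
  have hεle : ε ≤ ε₀/2 := min_le_left _ _
  have hεler : ε ≤ r := min_le_right _ _
  have hmem : ∀ s ∈ Set.Ioo (π/4 - ε) (π/4 + ε),
      Hmap γ N (Φ (s, 0)) = ((s, 0) : XX N) ∧ ((s, 0) : XX N) ∈ U := by
    intro s hs
    apply hball₀
    rw [Metric.mem_ball, Real.dist_eq, abs_sub_lt_iff]
    rcases hs with ⟨h1, h2⟩
    constructor <;> linarith
  refine ⟨ε, hεpos, fun s k => taOf ((Φ (s, 0)).2) k, ?_, ?_, ?_, ?_, ?_⟩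
  · -- value at the base point
    intro k
    show taOf ((Φ (basept N)).2) k = 0
    rw [hΦbase]
    exact taOf_zero
  · -- differentiability
    intro k
    by_cases hk : k < N + 1
    · have heq : (fun s : ℝ => taOf ((Φ (s, 0)).2) k)
          = fun s : ℝ => (Φ (s, 0)).2 ⟨k, hk⟩ := by
        funext s
        unfold taOf
        rw [dif_pos hk]
      rw [heq]
      intro s hs
      have hsU : ((s, 0) : XX N) ∈ U := (hmem s hs).2
      have hΦs : DifferentiableAt ℝ Φ ((s, 0) : XX N) :=
        hΦdiffU.differentiableAt (hUopen.mem_nhds hsU)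
      have hι : DifferentiableAt ℝ (fun t : ℝ => ((t, 0) : XX N)) s :=
        differentiableAt_id.prodMk (differentiableAt_const _)
      have h1 : DifferentiableAt ℝ (fun t : ℝ => Φ (t, 0)) s := hΦs.comp s hι
      have h2 : DifferentiableAt ℝ (fun t : ℝ => (Φ (t, 0)).2) s := h1.snd
      exact (((ContinuousLinearMap.proj (⟨k, hk⟩ : Fin (N+1))).differentiableAt).comp s
        h2).differentiableWithinAt
    · have heq : (fun s : ℝ => taOf ((Φ (s, 0)).2) k) = fun _ : ℝ => (0:ℝ) := by
        funext s
        unfold taOf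
        rw [dif_neg hk]
      rw [heq]
      exact differentiableOn_const 0
  · -- the equations hold
    intro γ₁ hγ₁
    have hH := (hmem γ₁ hγ₁).1
    have hz1 : (Φ ((γ₁, 0) : XX N)).1 = γ₁ := congrArg Prod.fst hH
    have hz2 : Gmap γ N (Φ ((γ₁, 0) : XX N)) = 0 := congrArg Prod.snd hH
    constructor
    · have h : Gmap γ N (Φ ((γ₁, 0) : XX N)) ⟨2, by omega⟩ = 0 := congrFun hz2 ⟨2, by omega⟩
      have e : Gmap γ N (Φ ((γ₁, 0) : XX N)) ⟨2, by omega⟩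
          = Fcomp γ N 2 (Φ ((γ₁, 0) : XX N)) := by
        rw [Gmap_apply]
        exact if_pos (Or.inl rfl)
      rw [e] at h
      have h'' : Fred γ N (Φ ((γ₁, 0) : XX N)).1 (taOf (Φ ((γ₁, 0) : XX N)).2 2)
          (taOf (Φ ((γ₁, 0) : XX N)).2) 2 = 0 := h
      rwa [hz1] at h''
    · intro k hkodd hk3 hkN
      have h : Gmap γ N (Φ ((γ₁, 0) : XX N)) ⟨k, by omega⟩ = 0 := congrFun hz2 ⟨k, by omega⟩
      have e : Gmap γ N (Φ ((γ₁, 0) : XX N)) ⟨k, by omega⟩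
          = Fcomp γ N k (Φ ((γ₁, 0) : XX N)) := by
        rw [Gmap_apply]
        exact if_pos (Or.inr ⟨hkodd, hk3⟩)
      rw [e] at h
      have h'' : Fred γ N (Φ ((γ₁, 0) : XX N)).1 (taOf (Φ ((γ₁, 0) : XX N)).2 2)
          (taOf (Φ ((γ₁, 0) : XX N)).2) k = 0 := h
      rwa [hz1] at h''
  · -- uniqueness
    intro ψ hψcont hψbase hψeq
    set w : ℝ → Fin (N+1) → ℝ := fun s k => if Rel k.1 then ψ s k.1 else 0 with hwdef
    have hagree : ∀ s, ∀ p, Odd p → p ≤ N → 3 ≤ p → taOf (w s) p = ψ s p := by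
      intro s p hp hpN hp3
      unfold taOf
      rw [dif_pos (by omega : p < N+1)]
      show (if Rel p then ψ s p else 0) = ψ s p
      exact if_pos (Or.inr ⟨hp, hp3⟩)
    have ha2 : ∀ s, taOf (w s) 2 = ψ s 2 := by
      intro s
      unfold taOf
      rw [dif_pos (by omega : 2 < N+1)]
      show (if Rel 2 then ψ s 2 else 0) = ψ s 2
      exact if_pos (Or.inl rfl)
    have hwcont : ContinuousAt (fun s : ℝ => ((s, w s) : XX N)) (π/4) := by
      apply ContinuousAt.prodMk continuousAt_id
      apply continuousAt_pi.mpr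
      intro k
      by_cases hR : Rel k.1
      · show ContinuousAt (fun s => if Rel k.1 then ψ s k.1 else 0) (π/4)
        simp only [if_pos hR]
        exact (hψcont k.1).continuousAt (isOpen_Ioo.mem_nhds ⟨by linarith, by linarith⟩)
      · show ContinuousAt (fun s => if Rel k.1 then ψ s k.1 else 0) (π/4)
        simp only [if_neg hR]
        exact continuousAt_const
    have hwbase : ((π/4 : ℝ), w (π/4)) = basept N := by
      refine Prod.ext rfl ?_
      show w (π/4) = 0
      funext k
      show (if Rel k.1 then ψ (π/4) k.1 else 0) = 0
      split
      · exact hψbase k.1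
      · rfl
    have hpre2 : {s : ℝ | Φ (Hmap γ N (s, w s)) = ((s, w s) : XX N)} ∈ 𝓝 (π/4 : ℝ) := by
      have h := hwcont.preimage_mem_nhds (by rw [hwbase]; exact hleftinv)
      exact h
    obtain ⟨δ₀, hδ₀pos, hballδ⟩ := Metric.mem_nhds_iff.mp hpre2
    refine ⟨min (δ₀/2) ε, lt_min (by positivity) hεpos, ?_⟩
    intro s hsδ
    have hδ1 : min (δ₀/2) ε ≤ δ₀/2 := min_le_left _ _
    have hδ2 : min (δ₀/2) ε ≤ ε := min_le_right _ _
    have hsε : s ∈ Set.Ioo (π/4 - ε) (π/4 + ε) := by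
      rcases hsδ with ⟨h1, h2⟩
      constructor <;> linarith
    have hψs := hψeq s hsε
    have hHw : Hmap γ N ((s, w s) : XX N) = ((s, 0) : XX N) := by
      unfold Hmap
      refine Prod.ext rfl ?_
      show Gmap γ N (s, w s) = 0
      funext k
      rw [Gmap_apply]
      by_cases hR : Rel k.1
      · rw [if_pos hR]
        show Fred γ N s (taOf (w s) 2) (taOf (w s)) k.1 = 0
        rw [Fred_congr (hagree s) hR (by omega : k.1 ≤ N), ha2 s]
        rcases hR with h2 | ⟨hodd, h3⟩
        · rw [h2]
          exact hψs.1
        · exact hψs.2 k.1 hodd h3 (by omega)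
      · rw [if_neg hR]
        show (if Rel k.1 then ψ s k.1 else 0) = 0
        exact if_neg hR
    have hΦeq : Φ ((s, 0) : XX N) = ((s, w s) : XX N) := by
      rw [← hHw]
      apply hballδ
      rw [Metric.mem_ball, Real.dist_eq, abs_sub_lt_iff]
      rcases hsδ with ⟨h1, h2⟩
      constructor <;> linarith
    constructor
    · show ψ s 2 = taOf ((Φ (s, 0)).2) 2
      rw [hΦeq]
      exact (ha2 s).symm
    · intro k hkodd hk3 hkN
      show ψ s k = taOf ((Φ (s, 0)).2) k
      rw [hΦeq]
      exact (hagree s k hkodd (by omega) hk3).symm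
  · -- asymptotics
    refine ⟨C, hCpos, ?_⟩
    intro t ht
    have ht' : t ∈ Set.Icc (π/4) (π/4 + r) := by
      rcases ht with ⟨h1, h2⟩
      constructor <;> linarith
    have hTay' := hTay t ht'
    have hg0 : (Φ ((π/4 : ℝ), (0 : Fin (N+1) → ℝ))).2 = 0 := by
      rw [show ((π/4 : ℝ), (0 : Fin (N+1) → ℝ)) = basept N from rfl, hΦbase]
      rfl
    rw [hg0, sub_zero] at hTay'
    have hcomp : ∀ k : Fin (N+1),
        |(Φ ((t, 0) : XX N)).2 k - (t - π/4) * cvec γ N k| ≤ C * (t - π/4)^2 := by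
      intro k
      have h := norm_le_pi_norm ((Φ ((t, 0) : XX N)).2 - (t - π/4) • cvec γ N) k
      rw [Pi.sub_apply, Pi.smul_apply, smul_eq_mul] at h
      calc |(Φ ((t, 0) : XX N)).2 k - (t - π/4) * cvec γ N k|
          ≤ ‖(Φ ((t, 0) : XX N)).2 - (t - π/4) • cvec γ N‖ := h
        _ ≤ C * (t - π/4)^2 := hTay'
    refine ⟨?_, ?_, ?_⟩
    · have h := hcomp ⟨2, by omega⟩
      have hc : cvec γ N ⟨2, by omega⟩ = 12/π := by
        show (if (2:ℕ) = 2 then 12/π else _) = 12/π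
        rw [if_pos rfl]
      rw [hc] at h
      show |taOf ((Φ (t, 0)).2) 2 - 12/π * (t - π/4)| ≤ C * (t - π/4)^2
      unfold taOf
      rw [dif_pos (by omega : 2 < N+1)]
      rw [show (12/π) * (t - π/4) = (t - π/4) * (12/π) from mul_comm _ _]
      exact h
    · by_cases h3N : 3 ≤ N
      · have h := hcomp ⟨3, by omega⟩
        have hc : cvec γ N ⟨3, by omega⟩
            = 144 * γ 3 (π/4) / (4*π*γ 3 (π/4) + 3*π^2) := by
          show (if (3:ℕ) = 2 then _ else if (3:ℕ) = 3 then _ else _) = _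
          rw [if_neg (by norm_num), if_pos rfl]
        rw [hc] at h
        show |taOf ((Φ (t, 0)).2) 3
            - 144 * γ 3 (π/4) / (4*π*γ 3 (π/4) + 3*π^2) * (t - π/4)| ≤ C * (t - π/4)^2
        unfold taOf
        rw [dif_pos (by omega : 3 < N+1)]
        rw [show 144 * γ 3 (π/4) / (4*π*γ 3 (π/4) + 3*π^2) * (t - π/4)
          = (t - π/4) * (144 * γ 3 (π/4) / (4*π*γ 3 (π/4) + 3*π^2)) from mul_comm _ _]
        exact h
      · have hφ3 : taOf ((Φ ((t, 0) : XX N)).2) 3 = 0 := by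
          unfold taOf
          rw [dif_neg (by omega)]
        have hγ3 : γ 3 (π/4) = 0 := hγhigh 3 (by omega) _
        show |taOf ((Φ (t, 0)).2) 3
            - 144 * γ 3 (π/4) / (4*π*γ 3 (π/4) + 3*π^2) * (t - π/4)| ≤ C * (t - π/4)^2
        rw [hφ3, hγ3]
        norm_num
        positivity
    · intro k hkodd hk5 hkN
      have h := hcomp ⟨k, by omega⟩
      have hko := Nat.odd_iff.mp hkodd
      have hc : cvec γ N ⟨k, by omega⟩ = 0 := by
        show (if k = 2 then _ else if k = 3 then _ else _) = (0:ℝ)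
        rw [if_neg (by omega), if_neg (by omega)]
      rw [hc, mul_zero, sub_zero] at h
      show |taOf ((Φ (t, 0)).2) k| ≤ C * (t - π/4)^2
      unfold taOf
      rw [dif_pos (by omega : k < N+1)]
      exact h
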